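/- Let V = ℝᵐ with m divisible by 4 and quaternionic structure J₁,J₂,J₃, and let A = c₄A₀ + (c₁−a₀)J₁A_{J₁} + (c₂−a₀)J₂A_{J₂} + (c₃−a₀)J₃A_{J₃} + a₁J₁(A₀ − J₁A_{J₁}) + a₂J₁(J₂A_{J₂} + J₃A_{J₃}) with a₁ = a₂ = 0 and a₀ = c₄. Then for any unit vector X the Jacobi operator J_X^A is diagonalizable with J_X^A(X) = 0, J_X^A(JᵢX) = cᵢJᵢX for i = 1,2,3, and J_X^A(Y) = c₄Y for Y ⟂ {X, J₁X, J₂X, J₃X}. -/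
import Mathlib


open RealInnerProductSpace

/-- The constant sectional curvature operator `A₀(X,Y)Z = ⟪Y,Z⟫X - ⟪X,Z⟫Y`. -/
noncomputable def A0op {V : Type*} [NormedAddCommGroup V] [InnerProductSpace ℝ V]
    (X Y Z : V) : V :=
  ⟪Y, Z⟫ • X - ⟪X, Z⟫ • Y

/-- The operator `A_J(X,Y)Z = (1/3)(⟪JY,Z⟫X - ⟪JX,Z⟫Y - 2⟪JX,Y⟫Z)`. -/
noncomputable def AJop {V : Type*} [NormedAddCommGroup V] [InnerProductSpace ℝ V]
    (J : V →ₗ[ℝ] V) (X Y Z : V) : V :=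
  (1/3 : ℝ) • (⟪J Y, Z⟫ • X - ⟪J X, Z⟫ • Y - (2 : ℝ) • ⟪J X, Y⟫ • Z)

section AuxLemmas
variable {V : Type*} [NormedAddCommGroup V] [InnerProductSpace ℝ V]

lemma skew_aux (J : V →ₗ[ℝ] V) (hJ2 : ∀ x, J (J x) = -x)
    (hJi : ∀ x y, ⟪J x, J y⟫ = ⟪x, y⟫) (x y : V) : ⟪J x, y⟫ = -⟪x, J y⟫ := by
  have h := hJi x (J y)
  rw [hJ2, inner_neg_right] at h
  linarith

lemma skew_self (J : V →ₗ[ℝ] V) (hJ2 : ∀ x, J (J x) = -x)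
    (hJi : ∀ x y, ⟪J x, J y⟫ = ⟪x, y⟫) (x : V) : ⟪J x, x⟫ = 0 := by
  have h := skew_aux J hJ2 hJi x x
  have h2 : ⟪x, J x⟫ = ⟪J x, x⟫ := real_inner_comm _ _
  linarith

lemma Jterm (J : V →ₗ[ℝ] V) (hJ2 : ∀ x, J (J x) = -x)
    (hJi : ∀ x y, ⟪J x, J y⟫ = ⟪x, y⟫) (X Y : V) :
    J (AJop J Y X X) = ⟪Y, J X⟫ • J X := by
  have h1 := skew_self J hJ2 hJi X
  have h2 := skew_aux J hJ2 hJi Y X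
  simp only [AJop, h1, h2, zero_smul, zero_sub, map_smul, map_sub, map_neg]
  module

end AuxLemmas

/-- Let `V = ℝᵐ` with `4 ∣ m` carry a quaternionic structure `J₁, J₂, J₃ = J₁J₂`, and
let `A = c₄A₀ + (c₁-a₀)J₁A_{J₁} + (c₂-a₀)J₂A_{J₂} + (c₃-a₀)J₃A_{J₃}
+ a₁J₁(A₀ - J₁A_{J₁}) + a₂J₁(J₂A_{J₂} + J₃A_{J₃})` with `a₁ = a₂ = 0` and `a₀ = c₄`.
Then for any unit vector `X`: `J_X^A(X) = 0`, `J_X^A(JᵢX) = cᵢ JᵢX` for `i = 1,2,3`,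
and `J_X^A(Y) = c₄ Y` for `Y ⟂ {X, J₁X, J₂X, J₃X}` (so `J_X^A` is diagonalizable). -/
theorem stmt19 {m : ℕ} (hm : 4 ∣ m)
    (J₁ J₂ : EuclideanSpace ℝ (Fin m) →ₗ[ℝ] EuclideanSpace ℝ (Fin m))
    (hJ₁2 : ∀ x, J₁ (J₁ x) = -x)
    (hJ₂2 : ∀ x, J₂ (J₂ x) = -x)
    (hJ₁i : ∀ x y, ⟪J₁ x, J₁ y⟫ = ⟪x, y⟫)
    (hJ₂i : ∀ x y, ⟪J₂ x, J₂ y⟫ = ⟪x, y⟫)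
    (hanti : ∀ x, J₁ (J₂ x) = -J₂ (J₁ x))
    (a₀ a₁ a₂ c₁ c₂ c₃ c₄ : ℝ)
    (ha₁ : a₁ = 0) (ha₂ : a₂ = 0) (ha₀ : a₀ = c₄)
    (A : EuclideanSpace ℝ (Fin m) → EuclideanSpace ℝ (Fin m) → EuclideanSpace ℝ (Fin m) →
      EuclideanSpace ℝ (Fin m))
    (hA : ∀ X Y Z, A X Y Z =
      c₄ • A0op X Y Z
      + (c₁ - a₀) • J₁ (AJop J₁ X Y Z)
      + (c₂ - a₀) • J₂ (AJop J₂ X Y Z)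
      + (c₃ - a₀) • (J₁ ∘ₗ J₂) (AJop (J₁ ∘ₗ J₂) X Y Z)
      + a₁ • J₁ (A0op X Y Z - J₁ (AJop J₁ X Y Z))
      + a₂ • J₁ (J₂ (AJop J₂ X Y Z) + (J₁ ∘ₗ J₂) (AJop (J₁ ∘ₗ J₂) X Y Z)))
    (X : EuclideanSpace ℝ (Fin m)) (hX : ‖X‖ = 1) :
    A X X X = 0 ∧
    A (J₁ X) X X = c₁ • J₁ X ∧
    A (J₂ X) X X = c₂ • J₂ X ∧
    A (J₁ (J₂ X)) X X = c₃ • J₁ (J₂ X) ∧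
    ∀ Y, ⟪X, Y⟫ = 0 → ⟪J₁ X, Y⟫ = 0 → ⟪J₂ X, Y⟫ = 0 → ⟪J₁ (J₂ X), Y⟫ = 0 →
      A Y X X = c₄ • Y := by
  subst ha₁ ha₂ ha₀
  set J₃ : EuclideanSpace ℝ (Fin m) →ₗ[ℝ] EuclideanSpace ℝ (Fin m) := J₁ ∘ₗ J₂ with hJ₃def
  have hJ₃ : ∀ x, J₃ x = J₁ (J₂ x) := fun x => rfl
  have hJ₃2 : ∀ x, J₃ (J₃ x) = -x := by
    intro x
    simp only [hJ₃, hanti, map_neg, hJ₁2, neg_neg, hJ₂2]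
  have hJ₃i : ∀ x y, ⟪J₃ x, J₃ y⟫ = ⟪x, y⟫ := by
    intro x y
    simp only [hJ₃, hJ₁i, hJ₂i]
  have hXX : ⟪X, X⟫ = 1 := by
    rw [real_inner_self_eq_norm_sq, hX]; norm_num
  -- skewness facts
  have s1 := skew_self J₁ hJ₁2 hJ₁i
  have s2 := skew_self J₂ hJ₂2 hJ₂i
  have s3 := skew_self J₃ hJ₃2 hJ₃i
  have k1 := skew_aux J₁ hJ₁2 hJ₁i
  have k2 := skew_aux J₂ hJ₂2 hJ₂i
  have k3 := skew_aux J₃ hJ₃2 hJ₃i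
  -- master formula
  have master : ∀ Y, A Y X X =
      a₀ • Y - (a₀ * ⟪Y, X⟫) • X + ((c₁ - a₀) * ⟪Y, J₁ X⟫) • J₁ X
        + ((c₂ - a₀) * ⟪Y, J₂ X⟫) • J₂ X + ((c₃ - a₀) * ⟪Y, J₃ X⟫) • J₃ X := by
    intro Y
    rw [hA, Jterm J₁ hJ₁2 hJ₁i, Jterm J₂ hJ₂2 hJ₂i, Jterm J₃ hJ₃2 hJ₃i]
    simp only [A0op, hXX, one_smul, zero_smul, add_zero]
    module
  -- orthogonality of the frame
  have o1 : ⟪X, J₁ X⟫ = 0 := by rw [real_inner_comm]; exact s1 X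
  have o2 : ⟪X, J₂ X⟫ = 0 := by rw [real_inner_comm]; exact s2 X
  have o3 : ⟪X, J₃ X⟫ = 0 := by rw [real_inner_comm]; exact s3 X
  have n1 : ⟪J₁ X, J₁ X⟫ = 1 := by rw [hJ₁i]; exact hXX
  have n2 : ⟪J₂ X, J₂ X⟫ = 1 := by rw [hJ₂i]; exact hXX
  have n3 : ⟪J₃ X, J₃ X⟫ = 1 := by rw [hJ₃i]; exact hXX
  have p12 : ⟪J₁ X, J₂ X⟫ = 0 := by
    have h1 : ⟪J₁ X, J₂ X⟫ = -⟪X, J₁ (J₂ X)⟫ := k1 X (J₂ X)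
    have h2 : ⟪J₂ X, J₁ X⟫ = -⟪X, J₂ (J₁ X)⟫ := k2 X (J₁ X)
    have h3 : ⟪J₁ X, J₂ X⟫ = ⟪J₂ X, J₁ X⟫ := real_inner_comm _ _
    have h4 : J₁ (J₂ X) = -J₂ (J₁ X) := hanti X
    rw [h4, inner_neg_right] at h1
    linarith
  have p13 : ⟪J₁ X, J₃ X⟫ = 0 := by
    rw [hJ₃, hJ₁i]
    exact o2
  have p23 : ⟪J₂ X, J₃ X⟫ = 0 := by
    rw [hJ₃]
    have := s1 (J₂ X)
    rw [real_inner_comm]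
    exact this
  have frame : ∀ Y, ⟪Y, X⟫ = ⟪Y, X⟫ := fun _ => rfl
  refine ⟨?_, ?_, ?_, ?_, ?_⟩
  · rw [master X, hXX, o1, o2, o3]
    module
  · rw [master (J₁ X), n1]
    rw [show ⟪J₁ X, X⟫ = 0 from s1 X, p12, p13]
    module
  · rw [master (J₂ X), n2]
    rw [show ⟪J₂ X, X⟫ = 0 from s2 X]
    rw [show ⟪J₂ X, J₁ X⟫ = 0 from by rw [real_inner_comm]; exact p12]
    rw [p23]
    module
  · have h := master (J₃ X)
    rw [hJ₃] at h
    rw [h]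
    rw [show ⟪J₁ (J₂ X), X⟫ = 0 from s3 X]
    rw [show ⟪J₁ (J₂ X), J₁ X⟫ = 0 from by rw [real_inner_comm]; exact p13]
    rw [show ⟪J₁ (J₂ X), J₂ X⟫ = 0 from by rw [real_inner_comm]; exact p23]
    rw [show ⟪J₁ (J₂ X), J₁ (J₂ X)⟫ = 1 from n3]
    module
  · intro Y h0 h1 h2 h3
    rw [master Y]
    rw [show ⟪Y, X⟫ = 0 from by rw [real_inner_comm]; exact h0]
    rw [show ⟪Y, J₁ X⟫ = 0 from by rw [real_inner_comm]; exact h1]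
    rw [show ⟪Y, J₂ X⟫ = 0 from by rw [real_inner_comm]; exact h2]
    rw [show ⟪Y, J₃ X⟫ = 0 from by rw [hJ₃, real_inner_comm]; exact h3]
    module
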